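/- Let Z be a critical offspring variable (E[Z]=1) whose log-Laplace transform κ_{Z−1}(t) is regularly varying at 0 with index α ∈ (1,2]. Then g_Z(s) = 1 − (1−s) + (1−s)^{α+o(1)} as s → 1, and consequently g_{B−A}(s) = 1 − (1−s)^{α−1+o(1)} as s → 1, where g_{B−A}(s) = (1−g_Z(s))/(1−s). -/

import Mathlib

open Filter

section Aux
open Real

lemma sump {p : ℕ → ℝ} (hsum : ∑' n : ℕ, p n = 1) : Summable p := by
  by_contra h
  rw [tsum_eq_zero_of_not_summable h] at hsum
  norm_num at hsum

lemma sumnp {p : ℕ → ℝ} (hmean : ∑' n : ℕ, (n : ℝ) * p n = 1) :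
    Summable (fun n : ℕ => (n:ℝ) * p n) := by
  by_contra h
  rw [tsum_eq_zero_of_not_summable h] at hmean
  norm_num at hmean

lemma sumF {p : ℕ → ℝ} (hp : ∀ n, 0 ≤ p n) (hsum : ∑' n : ℕ, p n = 1)
    (t : ℝ) (ht : 0 ≤ t) :
    Summable (fun n : ℕ => p n * Real.exp (-t * ((n:ℝ) - 1))) := by
  refine Summable.of_nonneg_of_le (fun n => mul_nonneg (hp n) (Real.exp_pos _).le) ?_
    ((sump hsum).mul_left (Real.exp t))
  intro n
  rw [mul_comm (Real.exp t) (p n)]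
  apply mul_le_mul_of_nonneg_left _ (hp n)
  apply Real.exp_le_exp.mpr
  have : (0:ℝ) ≤ (n:ℝ) := Nat.cast_nonneg n
  nlinarith

lemma F_ge_one {p : ℕ → ℝ} (hp : ∀ n, 0 ≤ p n) (hsum : ∑' n : ℕ, p n = 1)
    (hmean : ∑' n : ℕ, (n : ℝ) * p n = 1) (t : ℝ) (ht : 0 ≤ t) :
    1 ≤ ∑' n : ℕ, p n * Real.exp (-t * ((n:ℝ) - 1)) := by
  have hS1 := sump hsum
  have hS2 := sumnp hmean
  have hlin : Summable (fun n : ℕ => p n + t * p n - t * ((n:ℝ) * p n)) :=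
    ((hS1.add (hS1.mul_left t)).sub (hS2.mul_left t))
  have htsum : ∑' n : ℕ, (p n + t * p n - t * ((n:ℝ) * p n)) = 1 := by
    rw [Summable.tsum_sub (hS1.add (hS1.mul_left t)) (hS2.mul_left t),
      Summable.tsum_add hS1 (hS1.mul_left t), tsum_mul_left, tsum_mul_left, hsum, hmean]
    ring
  calc (1:ℝ) = ∑' n : ℕ, (p n + t * p n - t * ((n:ℝ) * p n)) := htsum.symm
  _ ≤ _ := by
      apply Summable.tsum_le_tsum _ hlin (sumF hp hsum t ht)
      intro n
      have h1 : (-t * ((n:ℝ) - 1)) + 1 ≤ Real.exp (-t * ((n:ℝ) - 1)) :=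
        Real.add_one_le_exp _
      have h2 : p n * ((-t * ((n:ℝ) - 1)) + 1) ≤ p n * Real.exp (-t * ((n:ℝ) - 1)) :=
        mul_le_mul_of_nonneg_left h1 (hp n)
      calc p n + t * p n - t * ((n:ℝ) * p n) = p n * ((-t * ((n:ℝ) - 1)) + 1) := by ring
      _ ≤ _ := h2

lemma F_mono {p : ℕ → ℝ} (hp : ∀ n, 0 ≤ p n) (hsum : ∑' n : ℕ, p n = 1)
    (hmean : ∑' n : ℕ, (n : ℝ) * p n = 1) {t u : ℝ} (htpos : 0 < t) (htu : t ≤ u) :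
    ∑' n : ℕ, p n * Real.exp (-t * ((n:ℝ) - 1)) ≤
      ∑' n : ℕ, p n * Real.exp (-u * ((n:ℝ) - 1)) := by
  rcases eq_or_lt_of_le htu with rfl | htu'
  · exact le_rfl
  have hupos : 0 < u := htpos.trans htu'
  have hP : 1 < u / t := (one_lt_div htpos).mpr htu'
  have hconj : (u/t).HolderConjugate ((u/t)/((u/t)-1)) :=
    Real.HolderConjugate.conjExponent hP
  set f : ℕ → ℝ := fun n => (p n * Real.exp (-u * ((n:ℝ) - 1))) ^ (t/u) with hfdef
  set g : ℕ → ℝ := fun n => (p n) ^ (1 - t/u) with hgdef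
  have htu0 : t/u ≠ 0 := ne_of_gt (div_pos htpos hupos)
  have hut : u - t ≠ 0 := ne_of_gt (by linarith)
  have hfnn : ∀ n, 0 ≤ f n := fun n => Real.rpow_nonneg (mul_nonneg (hp n) (Real.exp_pos _).le) _
  have hgnn : ∀ n, 0 ≤ g n := fun n => Real.rpow_nonneg (hp n) _
  have hfP : ∀ n, f n ^ (u/t) = p n * Real.exp (-u * ((n:ℝ) - 1)) := by
    intro n
    rw [hfdef, ← Real.rpow_mul (mul_nonneg (hp n) (Real.exp_pos _).le)]
    have he : t/u * (u/t) = 1 := by field_simp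
    rw [he, Real.rpow_one]
  have hgQ : ∀ n, g n ^ ((u/t)/((u/t)-1)) = p n := by
    intro n
    rw [hgdef, ← Real.rpow_mul (hp n)]
    have : (1 - t/u) * ((u/t)/((u/t)-1)) = 1 := by
      field_simp
    rw [this, Real.rpow_one]
  have hfg : ∀ n, f n * g n = p n * Real.exp (-t * ((n:ℝ) - 1)) := by
    intro n
    have hexp : (Real.exp (-u * ((n:ℝ)-1))) ^ (t/u) = Real.exp (-t * ((n:ℝ)-1)) := by
      rw [← Real.exp_mul]
      congr 1
      field_simp
    have hpn : (p n) ^ (t/u) * (p n) ^ (1 - t/u) = p n := by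
      rw [← Real.rpow_add' (hp n) (by norm_num)]
      norm_num
    rw [hfdef, hgdef]
    simp only []
    rw [Real.mul_rpow (hp n) (Real.exp_pos _).le, hexp]
    calc p n ^ (t/u) * Real.exp (-t * ((n:ℝ)-1)) * p n ^ (1 - t/u)
        = (p n ^ (t/u) * p n ^ (1 - t/u)) * Real.exp (-t * ((n:ℝ)-1)) := by ring
    _ = p n * Real.exp (-t * ((n:ℝ)-1)) := by rw [hpn]
  have hsumfP : Summable (fun n => f n ^ (u/t)) := by
    apply Summable.congr (sumF hp hsum u hupos.le)
    intro n
    exact (hfP n).symm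
  have hsumgQ : Summable (fun n => g n ^ ((u/t)/((u/t)-1))) := by
    apply Summable.congr (sump hsum)
    intro n
    exact (hgQ n).symm
  have hH := Real.summable_and_inner_le_Lp_mul_Lq_tsum_of_nonneg hconj hfnn hgnn hsumfP hsumgQ
  have hmain := hH.2
  rw [tsum_congr hfP, tsum_congr hgQ, tsum_congr hfg, hsum] at hmain
  rw [Real.one_rpow, mul_one, one_div_div] at hmain
  have hFu1 : 1 ≤ ∑' n : ℕ, p n * Real.exp (-u * ((n:ℝ) - 1)) :=
    F_ge_one hp hsum hmean u hupos.le
  calc ∑' n : ℕ, p n * Real.exp (-t * ((n:ℝ) - 1))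
      ≤ (∑' n : ℕ, p n * Real.exp (-u * ((n:ℝ) - 1))) ^ (t/u) := hmain
  _ ≤ (∑' n : ℕ, p n * Real.exp (-u * ((n:ℝ) - 1))) ^ (1:ℝ) :=
      Real.rpow_le_rpow_of_exponent_le hFu1 ((div_le_one hupos).mpr htu)
  _ = _ := Real.rpow_one _

lemma F_gt_one {p : ℕ → ℝ} (hp : ∀ n, 0 ≤ p n) (hsum : ∑' n : ℕ, p n = 1)
    (hmean : ∑' n : ℕ, (n : ℝ) * p n = 1) {m : ℕ} (hm : m ≠ 1) (hpm : 0 < p m)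
    (t : ℝ) (ht : 0 < t) :
    1 < ∑' n : ℕ, p n * Real.exp (-t * ((n:ℝ) - 1)) := by
  have hS1 := sump hsum
  have hS2 := sumnp hmean
  have hSF := sumF hp hsum t ht.le
  have hlin : Summable (fun n : ℕ => p n + t * p n - t * ((n:ℝ) * p n)) :=
    ((hS1.add (hS1.mul_left t)).sub (hS2.mul_left t))
  have htsum : ∑' n : ℕ, (p n + t * p n - t * ((n:ℝ) * p n)) = 1 := by
    rw [Summable.tsum_sub (hS1.add (hS1.mul_left t)) (hS2.mul_left t),
      Summable.tsum_add hS1 (hS1.mul_left t), tsum_mul_left, tsum_mul_left, hsum, hmean]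
    ring
  set d : ℕ → ℝ := fun n =>
    p n * Real.exp (-t * ((n:ℝ) - 1)) - (p n + t * p n - t * ((n:ℝ) * p n)) with hddef
  have hdnn : ∀ n, 0 ≤ d n := by
    intro n
    have h1 : (-t * ((n:ℝ) - 1)) + 1 ≤ Real.exp (-t * ((n:ℝ) - 1)) := Real.add_one_le_exp _
    have h2 : p n * ((-t * ((n:ℝ) - 1)) + 1) ≤ p n * Real.exp (-t * ((n:ℝ) - 1)) :=
      mul_le_mul_of_nonneg_left h1 (hp n)
    simp only [hddef]
    have : p n + t * p n - t * ((n:ℝ) * p n) = p n * ((-t * ((n:ℝ) - 1)) + 1) := by ring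
    rw [this]
    linarith
  have hdsum : Summable d := hSF.sub hlin
  have hdm : 0 < d m := by
    have hx : -t * ((m:ℝ) - 1) ≠ 0 := by
      apply mul_ne_zero (by linarith)
      have : (m:ℝ) ≠ 1 := by exact_mod_cast hm
      intro h; apply this; linarith
    have h1 : (-t * ((m:ℝ) - 1)) + 1 < Real.exp (-t * ((m:ℝ) - 1)) := Real.add_one_lt_exp hx
    have h2 : p m * ((-t * ((m:ℝ) - 1)) + 1) < p m * Real.exp (-t * ((m:ℝ) - 1)) :=
      (mul_lt_mul_iff_right₀ hpm).mpr h1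
    simp only [hddef]
    have : p m + t * p m - t * ((m:ℝ) * p m) = p m * ((-t * ((m:ℝ) - 1)) + 1) := by ring
    rw [this]
    linarith
  have hle : d m ≤ ∑' n, d n := Summable.le_tsum hdsum m (fun j _ => hdnn j)
  have htd : ∑' n, d n = (∑' n : ℕ, p n * Real.exp (-t * ((n:ℝ) - 1))) - 1 := by
    rw [hddef, Summable.tsum_sub hSF hlin, htsum]
  linarith [hle, htd ▸ hle]

lemma tendsto_div_atBot' {β : Type*} {l : Filter β} {f g : β → ℝ} {c : ℝ}
    (hf : Filter.Tendsto f l (nhds c)) (hg : Filter.Tendsto g l Filter.atBot) :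
    Filter.Tendsto (fun x => f x / g x) l (nhds 0) := by
  have hneg : Filter.Tendsto (fun x => -g x) l Filter.atTop := tendsto_neg_atBot_atTop.comp hg
  have h1 : Filter.Tendsto (fun x => f x / (-g x)) l (nhds 0) := hf.div_atTop hneg
  have h2 := h1.neg
  rw [neg_zero] at h2
  apply h2.congr
  intro x
  rw [div_neg, neg_neg]


set_option maxHeartbeats 1000000 in
lemma core (κ : ℝ → ℝ) (α : ℝ) (hαpos : 0 < α) (hα2 : α ≤ 2)
    (hpos : ∀ t, 0 < t → 0 < κ t)
    (hmono : ∀ t u, 0 < t → t ≤ u → κ t ≤ κ u)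
    (hrv : Tendsto (fun t => κ (t * (1/2)) / κ t) (nhdsWithin 0 (Set.Ioi 0))
      (nhds ((1/2 : ℝ) ^ α))) :
    Tendsto (fun t => Real.log (κ t) / Real.log t) (nhdsWithin 0 (Set.Ioi 0)) (nhds α) := by
  have hL : (0:ℝ) < Real.log 2 := Real.log_pos one_lt_two
  rw [Metric.tendsto_nhdsWithin_nhds]
  intro ε hε
  -- choose ε'
  set ε' : ℝ := min (ε/8) 1 with hε'def
  have hε'pos : 0 < ε' := lt_min (by linarith) one_pos
  have hε'le1 : ε' ≤ 1 := min_le_right _ _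
  have hε'leε : ε' ≤ ε/8 := min_le_left _ _
  -- ratio bounds eventually
  have hhalf : (0:ℝ) < 1/2 := by norm_num
  have hc1 : ((1:ℝ)/2) ^ (α + ε') < (1/2 : ℝ) ^ α := by
    apply Real.rpow_lt_rpow_of_exponent_gt hhalf (by norm_num) (by linarith)
  have hc2 : ((1:ℝ)/2) ^ α < (1/2 : ℝ) ^ (α - ε') := by
    apply Real.rpow_lt_rpow_of_exponent_gt hhalf (by norm_num) (by linarith)
  set c1 : ℝ := (1/2 : ℝ) ^ (α + ε') with hc1def
  set c2 : ℝ := (1/2 : ℝ) ^ (α - ε') with hc2def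
  have hc1pos : 0 < c1 := Real.rpow_pos_of_pos hhalf _
  have hc2pos : 0 < c2 := Real.rpow_pos_of_pos hhalf _
  have hev : ∀ᶠ t in nhdsWithin 0 (Set.Ioi 0),
      c1 < κ (t * (1/2)) / κ t ∧ κ (t * (1/2)) / κ t < c2 :=
    (hrv.eventually_const_lt hc1).and (hrv.eventually_lt_const hc2)
  rw [eventually_nhdsWithin_iff, Metric.eventually_nhds_iff] at hev
  obtain ⟨δ, hδpos, hδ⟩ := hev
  -- t0
  set t0 : ℝ := δ/2 with ht0def
  have ht0pos : 0 < t0 := by positivity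
  have ht0δ : t0 < δ := by rw [ht0def]; linarith
  have hratio : ∀ t, 0 < t → t ≤ t0 → c1 * κ t < κ (t * (1/2)) ∧ κ (t * (1/2)) < c2 * κ t := by
    intro t ht htt0
    have h1 : dist t 0 < δ := by
      rw [Real.dist_eq, sub_zero, abs_of_pos ht]; linarith
    have := hδ h1 ht
    have hκt : 0 < κ t := hpos t ht
    constructor
    · exact (lt_div_iff₀ hκt).mp this.1
    · exact (div_lt_iff₀ hκt).mp this.2
  -- dyadic bounds by induction
  have hdya : ∀ k : ℕ, κ t0 * c1 ^ k ≤ κ (t0 / 2 ^ k) ∧ κ (t0 / 2 ^ k) ≤ κ t0 * c2 ^ k := by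
    intro k
    induction k with
    | zero => simp
    | succ k ih =>
      have hk : (0:ℝ) < t0 / 2 ^ k := by positivity
      have hkle : t0 / 2 ^ k ≤ t0 :=
        div_le_self ht0pos.le (one_le_pow₀ one_le_two)
      have heq : t0 / 2 ^ (k+1) = (t0 / 2 ^ k) * (1/2) := by ring
      have hr := hratio _ hk hkle
      constructor
      · calc κ t0 * c1 ^ (k+1) = c1 * (κ t0 * c1 ^ k) := by ring
        _ ≤ c1 * κ (t0 / 2 ^ k) := by
            exact mul_le_mul_of_nonneg_left ih.1 hc1pos.le
        _ ≤ κ ((t0 / 2 ^ k) * (1/2)) := (hr.1).le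
        _ = κ (t0 / 2 ^ (k+1)) := by rw [heq]
      · calc κ (t0 / 2 ^ (k+1)) = κ ((t0 / 2 ^ k) * (1/2)) := by rw [heq]
        _ ≤ c2 * κ t0 * c2 ^ k := by
            calc κ ((t0 / 2 ^ k) * (1/2)) ≤ c2 * κ (t0 / 2 ^ k) := (hr.2).le
            _ ≤ c2 * (κ t0 * c2 ^ k) := mul_le_mul_of_nonneg_left ih.2 hc2pos.le
            _ = c2 * κ t0 * c2 ^ k := by ring
        _ = κ t0 * c2 ^ (k+1) := by ring
  -- abbreviations
  set A : ℝ := Real.log (κ t0) with hAdef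
  set T : ℝ := Real.log t0 with hTdef
  set L : ℝ := Real.log 2 with hLdef
  set C : ℝ := |A - α * T| + (α + 1) * L with hCdef
  have hCpos : 0 < C := by
    have : 0 ≤ |A - α * T| := abs_nonneg _
    nlinarith
  -- log bounds at dyadic points
  have hlogc1 : Real.log c1 = -((α + ε') * L) := by
    rw [hc1def, Real.log_rpow hhalf, one_div, Real.log_inv]; ring
  have hlogc2 : Real.log c2 = -((α - ε') * L) := by
    rw [hc2def, Real.log_rpow hhalf, one_div, Real.log_inv]; ring
  have hκt0pos : 0 < κ t0 := hpos t0 ht0pos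
  have hdyalog : ∀ k : ℕ, A - (k:ℝ) * (α + ε') * L ≤ Real.log (κ (t0 / 2 ^ k)) ∧
      Real.log (κ (t0 / 2 ^ k)) ≤ A - (k:ℝ) * (α - ε') * L := by
    intro k
    have hk := hdya k
    have hκk : 0 < κ (t0 / 2 ^ k) := hpos _ (by positivity)
    constructor
    · have := Real.log_le_log (by positivity) hk.1
      rw [Real.log_mul hκt0pos.ne' (by positivity), Real.log_pow, hlogc1] at this
      calc A - (k:ℝ) * (α + ε') * L = A + (k:ℝ) * -((α + ε') * L) := by ring
      _ ≤ _ := this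
    · have := Real.log_le_log hκk hk.2
      rw [Real.log_mul hκt0pos.ne' (by positivity), Real.log_pow, hlogc2] at this
      calc Real.log (κ (t0/2^k)) ≤ A + (k:ℝ) * -((α - ε') * L) := this
      _ = A - (k:ℝ) * (α - ε') * L := by ring
  -- choose N
  obtain ⟨N, hN⟩ := exists_nat_gt (max (2 * |T| / L) (4 * C / (ε * L)))
  have hN1 : 2 * |T| / L < (N:ℝ) := lt_of_le_of_lt (le_max_left _ _) hN
  have hN2 : 4 * C / (ε * L) < (N:ℝ) := lt_of_le_of_lt (le_max_right _ _) hN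
  refine ⟨t0 / 2 ^ (N+1), by positivity, ?_⟩
  intro t ht hdist
  have htpos : 0 < t := ht
  rw [Real.dist_eq, sub_zero, abs_of_pos htpos] at hdist
  -- define n
  set n : ℕ := ⌊Real.logb 2 (t0 / t)⌋₊ with hndef
  have ht0t : 0 < t0 / t := by positivity
  have hlogbN : (N:ℝ) + 1 < Real.logb 2 (t0 / t) := by
    rw [← Real.rpow_lt_rpow_left_iff (one_lt_two (α := ℝ))]
    · calc (2:ℝ) ^ ((N:ℝ)+1) = (2:ℝ) ^ (N+1 : ℕ) := by
            rw [← Real.rpow_natCast]; norm_num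
      _ < t0 / t := by
            rw [lt_div_iff₀ htpos]
            calc (2:ℝ)^(N+1) * t < 2^(N+1) * (t0 / 2^(N+1)) := by
                  exact mul_lt_mul_of_pos_left hdist (by positivity)
            _ = t0 := by field_simp
      _ = (2:ℝ) ^ Real.logb 2 (t0/t) := (Real.rpow_logb two_pos (by norm_num) ht0t).symm
  have hnN : (N:ℝ) + 1 ≤ (n:ℝ) := by
    have h1 : ((N:ℕ):ℝ) + 1 = ((N+1 : ℕ):ℝ) := by push_cast; ring
    have : (N+1 : ℕ) ≤ n := by
      apply Nat.le_floor
      rw [← h1]; exact hlogbN.le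
    exact_mod_cast this
  have hnpos : 0 < (n:ℝ) := by linarith [Nat.cast_nonneg (α := ℝ) N]
  -- sandwich t between dyadic points
  have hlogbpos : (0:ℝ) ≤ Real.logb 2 (t0 / t) := by
    have : (0:ℝ) ≤ (N:ℝ) + 1 := by positivity
    linarith
  have hfl : (n:ℝ) ≤ Real.logb 2 (t0 / t) := Nat.floor_le hlogbpos
  have hfl2 : Real.logb 2 (t0 / t) < (n:ℝ) + 1 := Nat.lt_floor_add_one _
  -- sandwich t between dyadic points
  have hub : t ≤ t0 / 2 ^ n := by
    have h2 : (2:ℝ) ^ ((n:ℕ):ℝ) ≤ t0 / t := (Real.le_logb_iff_rpow_le one_lt_two ht0t).mp hfl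
    rw [Real.rpow_natCast] at h2
    rw [le_div_iff₀ (by positivity)]
    rw [le_div_iff₀ htpos] at h2
    linarith
  have hlb : t0 / 2 ^ (n+1) < t := by
    have h2 : t0 / t < (2:ℝ) ^ ((n:ℝ)+1) := (Real.logb_lt_iff_lt_rpow one_lt_two ht0t).mp hfl2
    have he : (2:ℝ) ^ ((n:ℝ)+1) = (2:ℝ) ^ (n+1 : ℕ) := by
      rw [← Real.rpow_natCast]; push_cast; ring_nf
    rw [he, div_lt_iff₀ htpos] at h2
    rw [div_lt_iff₀ (by positivity)]
    linarith [mul_comm t ((2:ℝ)^(n+1))]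
  -- kappa bounds
  have hκub : κ t ≤ κ (t0 / 2 ^ n) := hmono t _ htpos hub
  have hκlb : κ (t0 / 2 ^ (n+1)) ≤ κ t := hmono _ t (by positivity) hlb.le
  have hκtpos : 0 < κ t := hpos t htpos
  have hcast : ((n+1:ℕ):ℝ) = (n:ℝ) + 1 := by push_cast; ring
  have hNum_ub : Real.log (κ t) ≤ A - (n:ℝ) * (α - ε') * L := by
    have := Real.log_le_log hκtpos hκub
    linarith [(hdyalog n).2]
  have hNum_lb : A - ((n:ℝ)+1) * (α + ε') * L ≤ Real.log (κ t) := by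
    have h1 := Real.log_le_log (hpos _ (by positivity)) hκlb
    have h2 := (hdyalog (n+1)).1
    rw [hcast] at h2
    linarith
  -- log t bounds
  have hlogdyad : ∀ k : ℕ, Real.log (t0 / 2 ^ k) = T - (k:ℝ) * L := by
    intro k
    rw [Real.log_div ht0pos.ne' (by positivity), Real.log_pow]
  have hD_ub : Real.log t ≤ T - (n:ℝ) * L := by
    have := Real.log_le_log htpos hub
    rwa [hlogdyad n] at this
  have hD_lb : T - ((n:ℝ)+1) * L ≤ Real.log t := by
    have := Real.log_le_log (by positivity) hlb.le
    rw [hlogdyad (n+1), hcast] at this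
    linarith
  -- denominator negativity and size
  have hTn : |T| < (n:ℝ) * L / 2 := by
    have h1 : 2 * |T| / L < (n:ℝ) := by linarith
    rw [div_lt_iff₀ hL] at h1
    linarith
  have hnL : 0 < (n:ℝ) * L := mul_pos hnpos hL
  have hDneg : Real.log t < 0 := by
    have := le_abs_self T
    linarith
  have hnegD : (n:ℝ) * L / 2 ≤ -Real.log t := by
    have := le_abs_self T
    linarith
  -- numerator estimate
  have hAT1 := le_abs_self (A - α * T)
  have hAT2 := neg_abs_le (A - α * T)
  have e1 : (A - (n:ℝ)*(α-ε')*L) - α*(T-((n:ℝ)+1)*L)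
      = (A - α*T) + α*L + (n:ℝ)*ε'*L := by ring
  have e2 : (A - ((n:ℝ)+1)*(α+ε')*L) - α*(T-(n:ℝ)*L)
      = (A - α*T) - (α+ε')*L - (n:ℝ)*ε'*L := by ring
  have h4 : α * L ≤ (α+1) * L :=
    mul_le_mul_of_nonneg_right (by linarith) hL.le
  have h5 : (α+ε') * L ≤ (α+1) * L :=
    mul_le_mul_of_nonneg_right (by linarith) hL.le
  have hm1 : α * Real.log t ≤ α * (T - (n:ℝ) * L) :=
    mul_le_mul_of_nonneg_left hD_ub hαpos.le
  have hm2 : α * (T - ((n:ℝ)+1) * L) ≤ α * Real.log t :=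
    mul_le_mul_of_nonneg_left hD_lb hαpos.le
  have habs : |Real.log (κ t) - α * Real.log t| ≤ C + (n:ℝ) * ε' * L := by
    rw [abs_le, hCdef]
    constructor
    · linarith
    · linarith
  -- final estimate
  rw [Real.dist_eq]
  have hDne : Real.log t ≠ 0 := hDneg.ne
  have heq : Real.log (κ t) / Real.log t - α
      = (Real.log (κ t) - α * Real.log t) / Real.log t := by
    field_simp
  rw [heq, abs_div, abs_of_neg hDneg, div_lt_iff₀ (by linarith : (0:ℝ) < -Real.log t)]
  have hCn : C < (n:ℝ) * L * ε / 4 := by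
    have h1 : 4 * C / (ε * L) < (n:ℝ) := by linarith
    rw [div_lt_iff₀ (by positivity)] at h1
    linarith [h1, (by ring : (n:ℝ)*(ε*L) = (n:ℝ)*L*ε)]
  have hε'n : (n:ℝ) * ε' * L ≤ (n:ℝ) * L * ε / 8 := by
    have h6 := mul_le_mul_of_nonneg_left hε'leε hnL.le
    linarith [h6, (by ring : (n:ℝ)*L*(ε/8) = (n:ℝ)*L*ε/8),
      (by ring : (n:ℝ)*L*ε' = (n:ℝ)*ε'*L)]
  have hnLε : 0 ≤ (n:ℝ) * L * ε := by positivity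
  calc |Real.log (κ t) - α * Real.log t| ≤ C + (n:ℝ) * ε' * L := habs
  _ < (n:ℝ) * L * ε / 4 + (n:ℝ) * L * ε / 8 := by linarith
  _ ≤ ε * ((n:ℝ) * L / 2) := by linarith
  _ ≤ ε * -Real.log t := mul_le_mul_of_nonneg_left hnegD hε.le

end Aux

/- STATEMENT 13: Let `Z` have law `p` with `E[Z] = 1` and let
`κ(t) = κ_{Z−1}(t) = log E[e^{−t(Z−1)}]` be regularly varying at `0` with index
`α ∈ (1,2]`. Then `g_Z(s) = 1 − (1−s) + (1−s)^{α+o(1)}` as `s → 1⁻`, i.e.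
`log(g_Z(s) − s)/log(1−s) → α`, and consequently
`g_{B−A}(s) = (1 − g_Z(s))/(1−s) = 1 − (1−s)^{α−1+o(1)}`, i.e.
`log(1 − g_{B−A}(s))/log(1−s) → α − 1`. -/
theorem stmt_13 (p : ℕ → ℝ) (hp : ∀ n, 0 ≤ p n)
    (hsum : ∑' n : ℕ, p n = 1)
    (hmean : ∑' n : ℕ, (n : ℝ) * p n = 1)
    (gZ κ : ℝ → ℝ)
    (hgZ : ∀ s : ℝ, gZ s = ∑' n : ℕ, p n * s ^ n)
    (hκ : ∀ t : ℝ, κ t = Real.log (∑' n : ℕ, p n * Real.exp (-t * ((n : ℝ) - 1))))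
    (α : ℝ) (hα : 1 < α) (hα2 : α ≤ 2)
    (hrv : ∀ y > (0 : ℝ), Tendsto (fun t => κ (t * y) / κ t)
      (nhdsWithin 0 (Set.Ioi 0)) (nhds (y ^ α))) :
    Tendsto (fun s => Real.log (gZ s - s) / Real.log (1 - s))
        (nhdsWithin 1 (Set.Ioo 0 1)) (nhds α) ∧
    Tendsto (fun s => Real.log (1 - (1 - gZ s) / (1 - s)) / Real.log (1 - s))
        (nhdsWithin 1 (Set.Ioo 0 1)) (nhds (α - 1)) := by
  classical
  -- degenerate case
  by_cases hdeg : ∀ n : ℕ, n ≠ 1 → p n = 0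
  · exfalso
    have hp1 : p 1 = 1 := by
      have := tsum_eq_single (L := SummationFilter.unconditional ℕ) (f := p) 1 (fun n hn => hdeg n hn)
      rw [this] at hsum
      exact hsum
    have hκ0 : ∀ t : ℝ, κ t = 0 := by
      intro t
      rw [hκ]
      have h1 : ∑' n : ℕ, p n * Real.exp (-t * ((n:ℝ) - 1)) = 1 := by
        rw [tsum_eq_single 1 (fun n hn => by rw [hdeg n hn]; ring)]
        norm_num [hp1]
      rw [h1, Real.log_one]
    have h2 := hrv 2 two_pos
    have h3 : Tendsto (fun t : ℝ => κ (t * 2) / κ t) (nhdsWithin 0 (Set.Ioi 0)) (nhds 0) := by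
      have : (fun t : ℝ => κ (t * 2) / κ t) = fun _ => 0 := by
        funext t; rw [hκ0, hκ0, div_zero]
      rw [this]
      exact tendsto_const_nhds
    have huniq := tendsto_nhds_unique h3 h2
    have : (0:ℝ) < 2 ^ α := Real.rpow_pos_of_pos two_pos α
    linarith
  push_neg at hdeg
  obtain ⟨m, hm1, hmne⟩ := hdeg
  have hpm : 0 < p m := (hp m).lt_of_ne (Ne.symm hmne)
  -- κ properties
  have hκpos : ∀ t : ℝ, 0 < t → 0 < κ t := by
    intro t ht
    rw [hκ]
    exact Real.log_pos (F_gt_one hp hsum hmean hm1 hpm t ht)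
  have hκmono : ∀ t u : ℝ, 0 < t → t ≤ u → κ t ≤ κ u := by
    intro t u ht htu
    rw [hκ, hκ]
    exact Real.log_le_log (lt_of_lt_of_le one_pos (F_ge_one hp hsum hmean t ht.le))
      (F_mono hp hsum hmean ht htu)
  have hαpos : (0:ℝ) < α := by linarith
  have hlog := core κ α hαpos hα2 hκpos hκmono (hrv (1/2) (by norm_num))
  -- filter abbreviation
  set l : Filter ℝ := nhdsWithin 1 (Set.Ioo 0 1) with hldef
  -- t map
  have h_t : Tendsto (fun s : ℝ => -Real.log s) l (nhdsWithin 0 (Set.Ioi 0)) := by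
    rw [tendsto_nhdsWithin_iff]
    constructor
    · have hc : Tendsto (fun s : ℝ => -Real.log s) (nhds 1) (nhds (-Real.log 1)) :=
        ((Real.continuousAt_log one_ne_zero).neg)
      rw [Real.log_one, neg_zero] at hc
      exact hc.mono_left nhdsWithin_le_nhds
    · filter_upwards [self_mem_nhdsWithin] with s hs
      exact neg_pos.mpr (Real.log_neg hs.1 hs.2)
  -- κ → 0 along 0+
  have hκlogbot : Tendsto (fun t => Real.log (κ t)) (nhdsWithin 0 (Set.Ioi 0)) atBot := by
    have hlt : Tendsto Real.log (nhdsWithin (0:ℝ) (Set.Ioi 0)) atBot :=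
      Real.tendsto_log_nhdsGT_zero
    have h1 : Tendsto (fun t => (Real.log (κ t) / Real.log t) * Real.log t)
        (nhdsWithin 0 (Set.Ioi 0)) atBot := hlog.pos_mul_atBot hαpos hlt
    apply h1.congr'
    filter_upwards [self_mem_nhdsWithin,
      (eventually_lt_nhds one_pos).filter_mono nhdsWithin_le_nhds] with t ht ht1
    exact div_mul_cancel₀ _ (ne_of_lt (Real.log_neg ht ht1))
  have hκ0' : Tendsto κ (nhdsWithin 0 (Set.Ioi 0)) (nhds 0) := by
    have h1 := Real.tendsto_exp_atBot.comp hκlogbot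
    apply h1.congr'
    filter_upwards [self_mem_nhdsWithin] with t ht
    exact Real.exp_log (hκpos t ht)
  have hu0 : Tendsto (fun s => κ (-Real.log s)) l (nhds 0) := hκ0'.comp h_t
  have h1 : Tendsto (fun s => Real.log (κ (-Real.log s)) / Real.log (-Real.log s)) l (nhds α) :=
    hlog.comp h_t
  -- 1 - s map
  have h1ms : Tendsto (fun s : ℝ => 1 - s) l (nhdsWithin 0 (Set.Ioi 0)) := by
    rw [tendsto_nhdsWithin_iff]
    constructor
    · have hc : Tendsto (fun s : ℝ => 1 - s) (nhds 1) (nhds (1 - 1)) :=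
        (continuous_const.sub continuous_id).tendsto 1
      rw [sub_self] at hc
      exact hc.mono_left nhdsWithin_le_nhds
    · filter_upwards [self_mem_nhdsWithin] with s hs
      exact sub_pos.mpr hs.2
  have hlogbot : Tendsto (fun s : ℝ => Real.log (1 - s)) l atBot :=
    Real.tendsto_log_nhdsGT_zero.comp h1ms
  -- small term 1 : log s / log (1-s) → 0
  have hlogs0 : Tendsto (fun s : ℝ => Real.log s) l (nhds 0) := by
    have hc : Tendsto Real.log (nhds (1:ℝ)) (nhds (Real.log 1)) :=
      Real.continuousAt_log one_ne_zero
    rw [Real.log_one] at hc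
    exact hc.mono_left nhdsWithin_le_nhds
  have hsmall1 : Tendsto (fun s : ℝ => Real.log s / Real.log (1 - s)) l (nhds 0) :=
    tendsto_div_atBot' hlogs0 hlogbot
  -- ratio log(-log s)/log(1-s) → 1
  have hq : Tendsto (fun s : ℝ => -Real.log s / (1 - s)) l (nhds 1) := by
    have hd := Real.hasDerivAt_log (one_ne_zero)
    rw [hasDerivAt_iff_tendsto_slope] at hd
    rw [inv_one] at hd
    have hmono : l ≤ nhdsWithin 1 {(1:ℝ)}ᶜ :=
      nhdsWithin_mono 1 (fun s hs => ne_of_lt hs.2)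
    have h2 := hd.mono_left hmono
    apply h2.congr
    intro s
    rw [slope_def_field, Real.log_one, sub_zero]
    rw [← neg_div_neg_eq, neg_sub]
  have hlogq : Tendsto (fun s : ℝ => Real.log (-Real.log s / (1 - s))) l (nhds 0) := by
    have hc : Tendsto Real.log (nhds (1:ℝ)) (nhds (Real.log 1)) :=
      Real.continuousAt_log one_ne_zero
    rw [Real.log_one] at hc
    exact hc.comp hq
  have hratio : Tendsto (fun s : ℝ => Real.log (-Real.log s) / Real.log (1 - s)) l (nhds 1) := by
    have h0 := tendsto_div_atBot' hlogq hlogbot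
    have h2 : Tendsto (fun s : ℝ => 1 + Real.log (-Real.log s / (1 - s)) / Real.log (1 - s)) l
        (nhds (1 + 0)) := tendsto_const_nhds.add h0
    rw [add_zero] at h2
    apply h2.congr'
    filter_upwards [self_mem_nhdsWithin] with s hs
    have hs0 := hs.1
    have hs1 := hs.2
    have hts : 0 < -Real.log s := neg_pos.mpr (Real.log_neg hs0 hs1)
    have h1s : 0 < 1 - s := by linarith
    have hlog1s : Real.log (1 - s) < 0 := Real.log_neg h1s (by linarith)
    rw [Real.log_div (ne_of_gt hts) (ne_of_gt h1s), sub_div, div_self (ne_of_lt hlog1s)]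
    ring
  -- v term
  have hucomp : Tendsto (fun s => κ (-Real.log s)) l (nhdsWithin 0 {(0:ℝ)}ᶜ) := by
    rw [tendsto_nhdsWithin_iff]
    refine ⟨hu0, ?_⟩
    filter_upwards [self_mem_nhdsWithin] with s hs
    exact ne_of_gt (hκpos _ (neg_pos.mpr (Real.log_neg hs.1 hs.2)))
  have hv : Tendsto (fun s => (Real.exp (κ (-Real.log s)) - 1) / κ (-Real.log s)) l (nhds 1) := by
    have hd := hasDerivAt_iff_tendsto_slope.mp (Real.hasDerivAt_exp 0)
    rw [Real.exp_zero] at hd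
    have h2 := hd.comp hucomp
    apply h2.congr
    intro s
    simp only [Function.comp_apply, slope_def_field, Real.exp_zero, sub_zero]
  have hlogv : Tendsto (fun s => Real.log ((Real.exp (κ (-Real.log s)) - 1) / κ (-Real.log s)))
      l (nhds 0) := by
    have hc : Tendsto Real.log (nhds (1:ℝ)) (nhds (Real.log 1)) :=
      Real.continuousAt_log one_ne_zero
    rw [Real.log_one] at hc
    exact hc.comp hv
  have hsmall2 : Tendsto (fun s => Real.log ((Real.exp (κ (-Real.log s)) - 1) / κ (-Real.log s))
      / Real.log (1 - s)) l (nhds 0) := tendsto_div_atBot' hlogv hlogbot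
  -- key algebraic identity
  have hfact : ∀ s : ℝ, s ∈ Set.Ioo (0:ℝ) 1 → gZ s - s = s * (Real.exp (κ (-Real.log s)) - 1) := by
    intro s hs
    have hs0 := hs.1
    have hts : 0 < -Real.log s := neg_pos.mpr (Real.log_neg hs0 hs.2)
    have hterm : ∀ n : ℕ, p n * Real.exp (-(-Real.log s) * ((n:ℝ) - 1))
        = (p n * s ^ n) * s⁻¹ := by
      intro n
      rw [neg_neg, mul_sub, mul_one, Real.exp_sub, mul_comm (Real.log s) ((n:ℝ)),
        Real.exp_nat_mul, Real.exp_log hs0, div_eq_mul_inv, mul_assoc]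
    have hFval : ∑' n : ℕ, p n * Real.exp (-(-Real.log s) * ((n:ℝ) - 1)) = gZ s * s⁻¹ := by
      rw [tsum_congr hterm, tsum_mul_right, hgZ]
    have hF1 : 1 ≤ gZ s * s⁻¹ := by
      rw [← hFval]
      exact F_ge_one hp hsum hmean _ hts.le
    have hκval : κ (-Real.log s) = Real.log (gZ s * s⁻¹) := by
      rw [hκ, hFval]
    have hexpκ : Real.exp (κ (-Real.log s)) = gZ s * s⁻¹ := by
      rw [hκval]
      exact Real.exp_log (by linarith)
    rw [hexpκ]
    field_simp
  have hpos_sub : ∀ s : ℝ, s ∈ Set.Ioo (0:ℝ) 1 → 0 < gZ s - s := by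
    intro s hs
    rw [hfact s hs]
    have hts : 0 < -Real.log s := neg_pos.mpr (Real.log_neg hs.1 hs.2)
    have h1 : 1 < Real.exp (κ (-Real.log s)) := by
      rw [← Real.exp_zero]
      exact Real.exp_lt_exp.mpr (hκpos _ hts)
    have := hs.1
    nlinarith
  -- eventually -log s < 1
  have hev1 : ∀ᶠ s in l, -Real.log s < 1 :=
    (h_t.mono_right nhdsWithin_le_nhds).eventually_lt_const one_pos
  -- main combination
  have hT : Tendsto (fun s : ℝ => Real.log s / Real.log (1 - s)
      + (Real.log (κ (-Real.log s)) / Real.log (-Real.log s))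
        * (Real.log (-Real.log s) / Real.log (1 - s))
      + Real.log ((Real.exp (κ (-Real.log s)) - 1) / κ (-Real.log s)) / Real.log (1 - s)) l
      (nhds (0 + α * 1 + 0)) := (hsmall1.add (h1.mul hratio)).add hsmall2
  rw [zero_add, mul_one, add_zero] at hT
  have hconc1 : Tendsto (fun s => Real.log (gZ s - s) / Real.log (1 - s)) l (nhds α) := by
    apply hT.congr'
    filter_upwards [self_mem_nhdsWithin, hev1] with s hs hts1
    have hs0 := hs.1
    have hs1 := hs.2
    have hts : 0 < -Real.log s := neg_pos.mpr (Real.log_neg hs0 hs1)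
    have hκt : 0 < κ (-Real.log s) := hκpos _ hts
    have hlogt_ne : Real.log (-Real.log s) ≠ 0 := ne_of_lt (Real.log_neg hts hts1)
    have hexp1 : 1 < Real.exp (κ (-Real.log s)) := by
      rw [← Real.exp_zero]; exact Real.exp_lt_exp.mpr hκt
    have hvpos : 0 < (Real.exp (κ (-Real.log s)) - 1) / κ (-Real.log s) :=
      div_pos (by linarith) hκt
    have hvprod : κ (-Real.log s) * ((Real.exp (κ (-Real.log s)) - 1) / κ (-Real.log s))
        = Real.exp (κ (-Real.log s)) - 1 := by
      field_simp
    have he : gZ s - s = s * (κ (-Real.log s)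
        * ((Real.exp (κ (-Real.log s)) - 1) / κ (-Real.log s))) := by
      rw [hfact s hs, hvprod]
    have hlogsub : Real.log (gZ s - s) = Real.log s + Real.log (κ (-Real.log s))
        + Real.log ((Real.exp (κ (-Real.log s)) - 1) / κ (-Real.log s)) := by
      rw [he, Real.log_mul (ne_of_gt hs0) (by positivity),
        Real.log_mul (ne_of_gt hκt) (ne_of_gt hvpos), add_assoc]
    have hmid : (Real.log (κ (-Real.log s)) / Real.log (-Real.log s))
        * (Real.log (-Real.log s) / Real.log (1 - s))
        = Real.log (κ (-Real.log s)) / Real.log (1 - s) := by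
      rw [div_mul_div_comm, mul_comm (Real.log (κ (-Real.log s))) (Real.log (-Real.log s)),
        mul_div_mul_left _ _ hlogt_ne]
    rw [hmid, hlogsub, add_div, add_div]
  refine ⟨hconc1, ?_⟩
  have h2' : Tendsto (fun s => Real.log (gZ s - s) / Real.log (1 - s) - 1) l (nhds (α - 1)) :=
    hconc1.sub tendsto_const_nhds
  apply h2'.congr'
  filter_upwards [self_mem_nhdsWithin] with s hs
  have hs0 := hs.1
  have hs1 := hs.2
  have h1s : 0 < 1 - s := by linarith
  have hlog1s_ne : Real.log (1 - s) ≠ 0 := ne_of_lt (Real.log_neg h1s (by linarith))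
  have halg : 1 - (1 - gZ s) / (1 - s) = (gZ s - s) / (1 - s) := by
    field_simp
    ring
  rw [eq_comm]
  rw [halg, Real.log_div (ne_of_gt (hpos_sub s hs)) (ne_of_gt h1s), sub_div,
    div_self hlog1s_ne]
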